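/- Let C be a nonempty closed set in a real Banach space X. If x ∈ X\C and the Fréchet subdifferential ∂d_C(x) of the distance function is nonempty, then x ∈ Ω(C). -/

import Mathlib

open Metric Filter Topology

/-- The Fréchet subdifferential of `f : X → ℝ` at `x`: the set of continuous linear
functionals `φ` with `liminf_{y → 0} (f(x+y) - f(x) - φ(y))/‖y‖ ≥ 0`, expressed in
`ε`-`δ` form. -/
def FrechetSubdiff {X : Type*} [NormedAddCommGroup X] [NormedSpace ℝ X]
    (f : X → ℝ) (x : X) : Set (X →L[ℝ] ℝ) :=
  {φ | ∀ ε > (0 : ℝ), ∃ δ > (0 : ℝ), ∀ y : X, ‖y‖ < δ →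
    f (x + y) - f x - φ y ≥ -ε * ‖y‖}

/-- The set `Ω(C)`: points `x ∉ C` for which there is a norm-one functional `x*` such that
for every `ε > 0` there is `δ > 0` with
`inf_{z ∈ C ∩ B(x, d_C(x)+δ)} x*(x-z) > (1-ε) d_C(x)`. -/
def OmegaSet {X : Type*} [NormedAddCommGroup X] [NormedSpace ℝ X] (C : Set X) : Set X :=
  {x | x ∉ C ∧ ∃ f : X →L[ℝ] ℝ, ‖f‖ = 1 ∧ ∀ ε > (0 : ℝ), ∃ δ > (0 : ℝ),
    sInf ((fun z => f (x - z)) '' (C ∩ Metric.closedBall x (Metric.infDist x C + δ)))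
      > (1 - ε) * Metric.infDist x C}

/-- If `x ∉ C` and the Fréchet subdifferential of the distance function `d_C` at `x` is
nonempty, then `x ∈ Ω(C)`. -/
theorem mem_omegaSet_of_frechetSubdiff_nonempty
    (X : Type*) [NormedAddCommGroup X] [NormedSpace ℝ X] [CompleteSpace X]
    (C : Set X) (hCclosed : IsClosed C) (hCne : C.Nonempty)
    (x : X) (hx : x ∉ C)
    (hsub : (FrechetSubdiff (fun z => Metric.infDist z C) x).Nonempty) :
    x ∈ OmegaSet C := by
  obtain ⟨φ, hφ⟩ := hsub
  set d := Metric.infDist x C with hd_def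
  have hd : 0 < d := (hCclosed.notMem_iff_infDist_pos hCne).mp hx
  -- core estimate
  have core : ∀ ε' > (0:ℝ), ∃ δ > (0:ℝ), ∀ z ∈ C, dist x z ≤ d + δ →
      (1 - ε') * ‖x - z‖ - ε' * d ≤ φ (x - z) := by
    intro ε' hε'
    obtain ⟨δ', hδ', H⟩ := hφ ε' hε'
    set t : ℝ := min 1 (δ' / (2 * (d + 1))) with ht_def
    have ht : 0 < t := lt_min one_pos (by positivity)
    have ht1 : t ≤ 1 := min_le_left _ _
    have ht2 : t ≤ δ' / (2 * (d + 1)) := min_le_right _ _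
    refine ⟨min 1 (ε' * d * t), lt_min one_pos (by positivity), ?_⟩
    intro z hz hdist
    have hn : ‖x - z‖ = dist x z := (dist_eq_norm x z).symm
    have hn_le : ‖x - z‖ ≤ d + ε' * d * t := by
      have h1 : min 1 (ε' * d * t) ≤ ε' * d * t := min_le_right _ _
      rw [hn]; linarith
    have hn_le1 : ‖x - z‖ ≤ d + 1 := by
      have := min_le_left 1 (ε' * d * t); rw [hn]; linarith
    set y := t • (z - x) with hy_def
    have hy_norm : ‖y‖ = t * ‖x - z‖ := by
      rw [hy_def, norm_smul, Real.norm_eq_abs, abs_of_pos ht, norm_sub_rev]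
    have hy_lt : ‖y‖ < δ' := by
      have h3 : t * ‖x - z‖ ≤ t * (d + 1) :=
        mul_le_mul_of_nonneg_left hn_le1 ht.le
      have h4 : t * (d + 1) ≤ (δ' / (2 * (d + 1))) * (d + 1) :=
        mul_le_mul_of_nonneg_right ht2 (by positivity)
      have h5 : (δ' / (2 * (d + 1))) * (d + 1) = δ' / 2 := by
        field_simp
      rw [hy_norm]; linarith [half_lt_self hδ']
    have key := H y hy_lt
    simp only at key
    have hub : Metric.infDist (x + y) C ≤ (1 - t) * ‖x - z‖ := by
      have heq : x + y - z = (1 - t) • (x - z) := by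
        rw [hy_def]; module
      calc Metric.infDist (x + y) C ≤ dist (x + y) z := Metric.infDist_le_dist_of_mem hz
        _ = ‖x + y - z‖ := dist_eq_norm _ _
        _ = (1 - t) * ‖x - z‖ := by
            rw [heq, norm_smul, Real.norm_eq_abs, abs_of_nonneg (by linarith)]
    have hφy : φ y = -(t * φ (x - z)) := by
      rw [hy_def, map_smul, smul_eq_mul]
      have : φ (z - x) = - φ (x - z) := by
        rw [← map_neg]; congr 1; abel
      rw [this]; ring
    rw [hφy, hy_norm, ← hd_def] at key
    have hgoal' : t * ((1 - ε') * ‖x - z‖ - ε' * d) ≤ t * φ (x - z) := by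
      nlinarith [key, hub, hn_le, ht, hε'.le, hd.le, norm_nonneg (x - z)]
    exact le_of_mul_le_mul_left hgoal' ht
  -- φ y ≤ ‖y‖ for all y
  have hle : ∀ y : X, φ y ≤ ‖y‖ := by
    intro y
    rcases eq_or_ne y 0 with rfl | hy0
    · simp
    have hny : 0 < ‖y‖ := norm_pos_iff.mpr hy0
    apply le_of_forall_pos_le_add
    intro ε hε
    obtain ⟨δ', hδ', H⟩ := hφ (ε / ‖y‖) (by positivity)
    set s : ℝ := δ' / (2 * ‖y‖) with hs_def
    have hs : 0 < s := by positivity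
    have hsy_norm : ‖s • y‖ = s * ‖y‖ := by
      rw [norm_smul, Real.norm_eq_abs, abs_of_pos hs]
    have hsy_lt : ‖s • y‖ < δ' := by
      rw [hsy_norm, hs_def]
      have : δ' / (2 * ‖y‖) * ‖y‖ = δ' / 2 := by field_simp
      rw [this]; linarith [half_lt_self hδ']
    have key := H (s • y) hsy_lt
    simp only at key
    have hlip : Metric.infDist (x + s • y) C - Metric.infDist x C ≤ ‖s • y‖ := by
      have := Metric.infDist_le_infDist_add_dist (x := x + s • y) (y := x) (s := C)
      have hdxy : dist (x + s • y) x = ‖s • y‖ := by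
        rw [dist_eq_norm]; congr 1; abel
      linarith
    have hφsy : φ (s • y) = s * φ y := by rw [map_smul, smul_eq_mul]
    rw [hφsy, hsy_norm] at key
    have : s * φ y ≤ s * ‖y‖ + (ε / ‖y‖) * (s * ‖y‖) := by
      rw [hsy_norm] at hlip; linarith
    have h2 : (ε / ‖y‖) * (s * ‖y‖) = ε * s := by field_simp
    rw [h2] at this
    have := (mul_le_mul_iff_right₀ hs).mp (by linarith : s * φ y ≤ s * (‖y‖ + ε))
    linarith
  have hφnorm_le : ‖φ‖ ≤ 1 := by
    apply ContinuousLinearMap.opNorm_le_bound φ zero_le_one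
    intro y
    rw [one_mul, Real.norm_eq_abs, abs_le]
    constructor
    · have := hle (-y); rw [map_neg, norm_neg] at this; linarith
    · exact hle y
  have hφnorm_ge : 1 ≤ ‖φ‖ := by
    apply le_of_forall_pos_le_add
    intro η hη
    obtain ⟨δ, hδ, Hc⟩ := core (η / 2) (by positivity)
    obtain ⟨z, hz, hzd⟩ := (Metric.infDist_lt_iff hCne).mp
      (by rw [← hd_def]; linarith : Metric.infDist x C < d + δ)
    have hest := Hc z hz hzd.le
    have hnle : d ≤ ‖x - z‖ := by
      rw [← dist_eq_norm]; exact Metric.infDist_le_dist_of_mem hz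
    have hnpos : 0 < ‖x - z‖ := lt_of_lt_of_le hd hnle
    have hop : φ (x - z) ≤ ‖φ‖ * ‖x - z‖ :=
      (le_abs_self _).trans ((Real.norm_eq_abs _ ▸ φ.le_opNorm (x - z)))
    -- (1 - η/2)‖x-z‖ - (η/2) d ≤ ‖φ‖‖x-z‖ and d ≤ ‖x-z‖
    have h1 : (1 - η) * ‖x - z‖ ≤ ‖φ‖ * ‖x - z‖ := by nlinarith
    have := (mul_le_mul_iff_left₀ hnpos).mp h1
    linarith
  refine ⟨hx, φ, le_antisymm hφnorm_le hφnorm_ge, ?_⟩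
  intro ε hε
  set ε' : ℝ := min (ε / 4) (1 / 4) with hε'_def
  have hε'pos : 0 < ε' := lt_min (by positivity) (by norm_num)
  obtain ⟨δ, hδ, Hc⟩ := core ε' hε'pos
  refine ⟨δ, hδ, ?_⟩
  have hne : ((fun z => φ (x - z)) '' (C ∩ Metric.closedBall x (Metric.infDist x C + δ))).Nonempty := by
    obtain ⟨z, hz, hzd⟩ := (Metric.infDist_lt_iff hCne).mp
      (by rw [← hd_def]; linarith : Metric.infDist x C < Metric.infDist x C + δ)
    exact ⟨φ (x - z), ⟨z, ⟨hz, Metric.mem_closedBall.mpr (by rw [dist_comm]; exact hzd.le)⟩, rfl⟩⟩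
  have hbound : ∀ a ∈ ((fun z => φ (x - z)) '' (C ∩ Metric.closedBall x (Metric.infDist x C + δ))),
      (1 - ε / 2) * d ≤ a := by
    rintro a ⟨z, ⟨hz, hzball⟩, rfl⟩
    have hzd : dist x z ≤ d + δ := by
      rw [dist_comm]; simpa [← hd_def] using Metric.mem_closedBall.mp hzball
    have hest := Hc z hz hzd
    have hnle : d ≤ ‖x - z‖ := by
      rw [← dist_eq_norm]; exact Metric.infDist_le_dist_of_mem hz
    have hε'1 : ε' ≤ 1 / 4 := min_le_right _ _
    have hε'2 : ε' ≤ ε / 4 := min_le_left _ _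
    -- (1 - ε')‖x-z‖ - ε' d ≥ (1 - 2ε') d ≥ (1 - ε/2) d
    nlinarith [norm_nonneg (x - z)]
  have hlt : (1 - ε) * d < (1 - ε / 2) * d := by nlinarith
  calc (1 - ε) * Metric.infDist x C = (1 - ε) * d := by rw [← hd_def]
    _ < (1 - ε / 2) * d := hlt
    _ ≤ sInf _ := le_csInf hne hbound
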